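/- Let k, m, u > 0 with u < u₀ := m·y₃, where y₃ = (√(1+4k) − 1)/(2k), and let x₃ = (m·y₃ − u)/y₃². Consider the characteristic polynomial λ² − T·λ + D of the Jacobian at the positive equilibrium, where T = m − 2u/y₃ and D = y₃²·x₃·(k·y₃² + 1). Then: (i) if u < u₀/2, every complex root has strictly positive real part; (ii) if u₀/2 < u < u₀, every complex root has strictly negative real part; (iii) if u = u₀/2, the roots are purely imaginary and equal ±i·y₃·ω, where ω = √(x₃·(k·y₃² + 1)). -/

import Mathlib

/-- Roots of the characteristic polynomial `λ² - Tλ + D` of the Jacobian at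
the positive equilibrium, where `T = m - 2u/y₃` and `D = y₃²x₃(ky₃²+1)`:
(i) if `u < u₀/2` all roots have positive real part; (ii) if `u₀/2 < u < u₀`
all roots have negative real part; (iii) if `u = u₀/2` the roots are exactly
`±i·y₃·ω` with `ω = √(x₃(ky₃²+1))`. -/
theorem stmt8 (k m u : ℝ) (hk : 0 < k) (hm : 0 < m) (hu : 0 < u)
    (y₃ u₀ x₃ T D ω : ℝ)
    (hy₃ : y₃ = (Real.sqrt (1 + 4 * k) - 1) / (2 * k))
    (hu₀ : u₀ = m * y₃) (hult : u < u₀)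
    (hx₃ : x₃ = (m * y₃ - u) / y₃ ^ 2)
    (hT : T = m - 2 * u / y₃)
    (hD : D = y₃ ^ 2 * x₃ * (k * y₃ ^ 2 + 1))
    (hω : ω = Real.sqrt (x₃ * (k * y₃ ^ 2 + 1))) :
    (u < u₀ / 2 →
      ∀ lam : ℂ, lam ^ 2 - (T : ℂ) * lam + (D : ℂ) = 0 → 0 < lam.re) ∧
    (u₀ / 2 < u → u < u₀ →
      ∀ lam : ℂ, lam ^ 2 - (T : ℂ) * lam + (D : ℂ) = 0 → lam.re < 0) ∧
    (u = u₀ / 2 →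
      ∀ lam : ℂ, lam ^ 2 - (T : ℂ) * lam + (D : ℂ) = 0 ↔
        lam = Complex.I * (y₃ * ω) ∨ lam = -(Complex.I * (y₃ * ω))) := by
  have hs : Real.sqrt (1 + 4 * k) ^ 2 = 1 + 4 * k := Real.sq_sqrt (by linarith)
  have hs1 : 1 < Real.sqrt (1 + 4 * k) := by
    nlinarith [Real.sqrt_nonneg (1 + 4 * k)]
  have hy3 : 0 < y₃ := by
    rw [hy₃]; apply div_pos (by linarith) (by linarith)
  have hx3 : 0 < x₃ := by
    rw [hx₃]
    apply div_pos _ (by positivity)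
    have h1 : u < m * y₃ := by rw [← hu₀]; exact hult
    linarith
  have hDpos : 0 < D := by rw [hD]; positivity
  have hTy : T = (u₀ - 2 * u) / y₃ := by
    rw [hT, hu₀]; field_simp
  have hω2 : ω ^ 2 = x₃ * (k * y₃ ^ 2 + 1) := by
    rw [hω]; exact Real.sq_sqrt (by positivity)
  -- generic lemma: roots lie strictly between 0 and T (sign-wise)
  have key : ∀ lam : ℂ, lam ^ 2 - (T : ℂ) * lam + (D : ℂ) = 0 →
      lam.re * (T - lam.re) > 0 ∨ (lam.re = T / 2 ∧ lam.im ≠ 0) := by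
    intro lam h
    have hre := congrArg Complex.re h
    have him := congrArg Complex.im h
    simp [Complex.ext_iff, pow_two, Complex.sub_re, Complex.add_re, Complex.mul_re,
      Complex.mul_im, Complex.sub_im, Complex.add_im] at hre him
    set a := lam.re; set b := lam.im
    have him' : b * (2 * a - T) = 0 := by ring_nf; ring_nf at him; linarith
    rcases mul_eq_zero.mp him' with hb | ha
    · left
      have : a * a - b * b - T * a + D = 0 := by linarith
      rw [hb] at this
      nlinarith
    · by_cases hb : b = 0
      · left
        have h1 : a * a - b * b - T * a + D = 0 := by linarith
        rw [hb] at h1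
        nlinarith
      · right
        exact ⟨by linarith, hb⟩
  refine ⟨?_, ?_, ?_⟩
  · intro hu2 lam h
    have hTpos : 0 < T := by
      rw [hTy]; apply div_pos (by linarith) hy3
    rcases key lam h with h1 | ⟨h1, _⟩
    · nlinarith
    · rw [h1]; positivity
  · intro hu2 _ lam h
    have hTneg : T < 0 := by
      rw [hTy]; apply div_neg_of_neg_of_pos (by linarith) hy3
    rcases key lam h with h1 | ⟨h1, _⟩
    · nlinarith
    · rw [h1]; linarith
  · intro hu2 lam
    have hT0 : T = 0 := by
      rw [hTy, hu2]; field_simp; ring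
    have hc : (y₃ : ℂ) ^ 2 * (ω : ℂ) ^ 2 = (D : ℂ) := by
      norm_cast
      rw [hD]; linear_combination y₃ ^ 2 * hω2
    have hw2 : (Complex.I * (y₃ * ω)) ^ 2 = -(D : ℂ) := by
      rw [mul_pow, Complex.I_sq]
      linear_combination -hc
    constructor
    · intro h
      rw [hT0] at h
      push_cast at h
      have h2 : (lam - Complex.I * (y₃ * ω)) * (lam + Complex.I * (y₃ * ω)) = 0 := by
        have : lam ^ 2 - (Complex.I * (y₃ * ω)) ^ 2 = 0 := by
          rw [hw2]; linear_combination h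
        linear_combination this
      rcases mul_eq_zero.mp h2 with h3 | h3
      · exact Or.inl (sub_eq_zero.mp h3)
      · right
        have := eq_neg_of_add_eq_zero_left h3
        rw [this]
    · intro h
      rw [hT0]
      push_cast
      rcases h with h | h <;> rw [h] <;> linear_combination hw2
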